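/- Suppose in addition that p > 0 and p ∈ W¹_{2,loc}(ℝ). Then for every φ ∈ W²₂(ℝ) with compact support and every u ∈ Dom(L), the product φ·u belongs to Dom(L₀₀); in particular φu and (φu)^[1] are locally absolutely continuous, l[φu] ∈ L²(ℝ), and supp(φu) is compact. -/

import Mathlib

open MeasureTheory Complex Filter Set

noncomputable section

/-- The complex Hilbert space `L²(ℝ)`. -/
abbrev Hsp : Type := Lp ℂ 2 (volume : Measure ℝ)

/-- `u` is locally absolutely continuous on `ℝ` with a.e. derivative `g`
(i.e. `u` is the indefinite integral of the locally integrable function `g`). -/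
def HasLocDeriv (u g : ℝ → ℂ) : Prop :=
  LocallyIntegrable g volume ∧ ∀ x : ℝ, u x = u 0 + ∫ t in (0:ℝ)..x, g t

lemma HasLocDeriv.intervalIntegrable {u g : ℝ → ℂ} (h : HasLocDeriv u g) (a b : ℝ) :
    IntervalIntegrable g volume a b :=
  (h.1.integrableOn_isCompact isCompact_uIcc).intervalIntegrable

lemma HasLocDeriv.congr_fun {u v g : ℝ → ℂ} (h : HasLocDeriv u g) (huv : ∀ x, v x = u x) :
    HasLocDeriv v g :=
  ⟨h.1, fun x => by rw [huv x, huv 0]; exact h.2 x⟩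

lemma HasLocDeriv.zero : HasLocDeriv (0 : ℝ → ℂ) 0 := by
  refine ⟨locallyIntegrable_const (0 : ℂ), fun x => by simp⟩

lemma HasLocDeriv.add {u g v h' : ℝ → ℂ} (hu : HasLocDeriv u g) (hv : HasLocDeriv v h') :
    HasLocDeriv (fun x => u x + v x) (fun x => g x + h' x) := by
  refine ⟨hu.1.add hv.1, fun x => ?_⟩
  show u x + v x = u 0 + v 0 + ∫ t in (0:ℝ)..x, (g t + h' t)
  rw [intervalIntegral.integral_add (hu.intervalIntegrable 0 x) (hv.intervalIntegrable 0 x),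
    hu.2 x, hv.2 x]
  ring

lemma HasLocDeriv.const_mul {u g : ℝ → ℂ} (c : ℂ) (hu : HasLocDeriv u g) :
    HasLocDeriv (fun x => c * u x) (fun x => c * g x) := by
  have hli : LocallyIntegrable (fun x => c * g x) volume := hu.1.smul c
  refine ⟨hli, fun x => ?_⟩
  have h : ∫ t in (0:ℝ)..x, c * g t = c * ∫ t in (0:ℝ)..x, g t := by
    simpa [smul_eq_mul] using intervalIntegral.integral_smul c g (a := (0:ℝ)) (b := x) (μ := volume)
  show c * u x = c * u 0 + ∫ t in (0:ℝ)..x, c * g t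
  rw [h, hu.2 x]
  ring

/-- The first quasi-derivative `u^{[1]} = p u' - (Q + i r) u`. -/
def qd1 (p Q r : ℝ → ℝ) (u u' : ℝ → ℂ) : ℝ → ℂ :=
  fun x => (p x : ℂ) * u' x - ((Q x : ℂ) + Complex.I * (r x : ℂ)) * u x

/-- `u` belongs (locally) to the domain of the quasi-differential expression:
`u` is locally absolutely continuous with derivative `u'` and the first quasi-derivative
`u^{[1]} = p u' - (Q + i r) u` is locally absolutely continuous with derivative `w`. -/
def QDom (p Q s r : ℝ → ℝ) (u u' w : ℝ → ℂ) : Prop :=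
  HasLocDeriv u u' ∧ HasLocDeriv (qd1 p Q r u u') w

/-- The quasi-differential expression `l[u] = -u^{[2]}` where
`u^{[2]} = (u^{[1]})' + ((Q - i r)/p) u^{[1]} + ((Q² + r²)/p - s) u`. -/
def lExpr (p Q s r : ℝ → ℝ) (u u' w : ℝ → ℂ) : ℝ → ℂ := fun x =>
  -(w x + (((Q x : ℂ) - Complex.I * (r x : ℂ)) / (p x : ℂ)) * qd1 p Q r u u' x
    + ((((Q x) ^ 2 + (r x) ^ 2 : ℝ) : ℂ) / (p x : ℂ) - (s x : ℂ)) * u x)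

/-- The standing minimal regularity assumptions on the real-valued coefficients:
`1/√|p|, Q/√|p|, r/√|p| ∈ L²_loc(ℝ)`, `s ∈ L¹_loc(ℝ)` and `1/p ≠ 0` a.e. -/
structure Coeffs (p Q s r : ℝ → ℝ) : Prop where
  meas_p : Measurable p
  meas_Q : Measurable Q
  meas_s : Measurable s
  meas_r : Measurable r
  hp : LocallyIntegrable (fun x => 1 / |p x|) volume
  hQ : LocallyIntegrable (fun x => (Q x) ^ 2 / |p x|) volume
  hr : LocallyIntegrable (fun x => (r x) ^ 2 / |p x|) volume
  hs : LocallyIntegrable s volume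
  hp0 : ∀ᵐ x ∂(volume : Measure ℝ), p x ≠ 0

lemma qd1_add_eq (p Q r : ℝ → ℝ) (u₁ u₁' u₂ u₂' : ℝ → ℂ) (x : ℝ) :
    qd1 p Q r (fun y => u₁ y + u₂ y) (fun y => u₁' y + u₂' y) x
      = qd1 p Q r u₁ u₁' x + qd1 p Q r u₂ u₂' x := by
  simp only [qd1]; ring

lemma qd1_smul_eq (p Q r : ℝ → ℝ) (c : ℂ) (u u' : ℝ → ℂ) (x : ℝ) :
    qd1 p Q r (fun y => c * u y) (fun y => c * u' y) x = c * qd1 p Q r u u' x := by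
  simp only [qd1]; ring

lemma QDom.zero (p Q s r : ℝ → ℝ) : QDom p Q s r 0 0 0 := by
  refine ⟨HasLocDeriv.zero, HasLocDeriv.zero.congr_fun fun x => ?_⟩
  simp [qd1]

lemma QDom.add {p Q s r : ℝ → ℝ} {u₁ u₁' w₁ u₂ u₂' w₂ : ℝ → ℂ}
    (h₁ : QDom p Q s r u₁ u₁' w₁) (h₂ : QDom p Q s r u₂ u₂' w₂) :
    QDom p Q s r (fun x => u₁ x + u₂ x) (fun x => u₁' x + u₂' x) (fun x => w₁ x + w₂ x) :=
  ⟨h₁.1.add h₂.1, (h₁.2.add h₂.2).congr_fun (qd1_add_eq p Q r u₁ u₁' u₂ u₂')⟩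

lemma QDom.smul {p Q s r : ℝ → ℝ} {u u' w : ℝ → ℂ} (c : ℂ) (h : QDom p Q s r u u' w) :
    QDom p Q s r (fun x => c * u x) (fun x => c * u' x) (fun x => c * w x) :=
  ⟨h.1.const_mul c, (h.2.const_mul c).congr_fun (qd1_smul_eq p Q r c u u')⟩

lemma lExpr_zero (p Q s r : ℝ → ℝ) (x : ℝ) : lExpr p Q s r 0 0 0 x = 0 := by
  simp [lExpr, qd1]

lemma lExpr_add (p Q s r : ℝ → ℝ) (u₁ u₁' w₁ u₂ u₂' w₂ : ℝ → ℂ) (x : ℝ) :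
    lExpr p Q s r (fun y => u₁ y + u₂ y) (fun y => u₁' y + u₂' y) (fun y => w₁ y + w₂ y) x
      = lExpr p Q s r u₁ u₁' w₁ x + lExpr p Q s r u₂ u₂' w₂ x := by
  simp only [lExpr, qd1]; ring

lemma lExpr_smul (p Q s r : ℝ → ℝ) (c : ℂ) (u u' w : ℝ → ℂ) (x : ℝ) :
    lExpr p Q s r (fun y => c * u y) (fun y => c * u' y) (fun y => c * w y) x
      = c * lExpr p Q s r u u' w x := by
  simp only [lExpr, qd1]; ring

/-- The graph of the maximal operator `L` in `L²(ℝ) × L²(ℝ)`. -/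
def maxGraph (p Q s r : ℝ → ℝ) : Submodule ℂ (Hsp × Hsp) where
  carrier := {fg | ∃ u u' w, QDom p Q s r u u' w ∧ (⇑fg.1 =ᵐ[volume] u) ∧
    (⇑fg.2 =ᵐ[volume] lExpr p Q s r u u' w)}
  zero_mem' := by
    refine ⟨0, 0, 0, QDom.zero p Q s r, ?_, ?_⟩
    · filter_upwards [Lp.coeFn_zero ℂ 2 (volume : Measure ℝ)] with x hx using hx
    · filter_upwards [Lp.coeFn_zero ℂ 2 (volume : Measure ℝ)] with x hx
      rw [lExpr_zero]; exact hx
  add_mem' := by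
    rintro ⟨f₁, g₁⟩ ⟨f₂, g₂⟩ ⟨u₁, u₁', w₁, hq₁, hf₁, hg₁⟩ ⟨u₂, u₂', w₂, hq₂, hf₂, hg₂⟩
    refine ⟨fun x => u₁ x + u₂ x, fun x => u₁' x + u₂' x, fun x => w₁ x + w₂ x,
      hq₁.add hq₂, ?_, ?_⟩
    · filter_upwards [Lp.coeFn_add f₁ f₂, hf₁, hf₂] with x h1 h2 h3
      show (⇑(f₁ + f₂)) x = _
      rw [h1]; simp [h2, h3]
    · filter_upwards [Lp.coeFn_add g₁ g₂, hg₁, hg₂] with x h1 h2 h3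
      show (⇑(g₁ + g₂)) x = _
      rw [h1, lExpr_add]; simp [h2, h3]
  smul_mem' := by
    rintro c ⟨f, g⟩ ⟨u, u', w, hq, hf, hg⟩
    refine ⟨fun x => c * u x, fun x => c * u' x, fun x => c * w x, hq.smul c, ?_, ?_⟩
    · filter_upwards [Lp.coeFn_smul c f, hf] with x h1 h2
      show (⇑(c • f)) x = _
      rw [h1]; simp [h2]
    · filter_upwards [Lp.coeFn_smul c g, hg] with x h1 h2
      show (⇑(c • g)) x = _
      rw [h1, lExpr_smul]; simp [h2]

/-- The graph of the preminimal operator `L₀₀` (compactly supported members of the graph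
of the maximal operator). -/
def preminGraph (p Q s r : ℝ → ℝ) : Submodule ℂ (Hsp × Hsp) where
  carrier := {fg | ∃ u u' w, QDom p Q s r u u' w ∧ HasCompactSupport u ∧
    (⇑fg.1 =ᵐ[volume] u) ∧ (⇑fg.2 =ᵐ[volume] lExpr p Q s r u u' w)}
  zero_mem' := by
    refine ⟨0, 0, 0, QDom.zero p Q s r, by simpa using HasCompactSupport.zero, ?_, ?_⟩
    · filter_upwards [Lp.coeFn_zero ℂ 2 (volume : Measure ℝ)] with x hx using hx
    · filter_upwards [Lp.coeFn_zero ℂ 2 (volume : Measure ℝ)] with x hx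
      rw [lExpr_zero]; exact hx
  add_mem' := by
    rintro ⟨f₁, g₁⟩ ⟨f₂, g₂⟩ ⟨u₁, u₁', w₁, hq₁, hc₁, hf₁, hg₁⟩ ⟨u₂, u₂', w₂, hq₂, hc₂, hf₂, hg₂⟩
    refine ⟨fun x => u₁ x + u₂ x, fun x => u₁' x + u₂' x, fun x => w₁ x + w₂ x,
      hq₁.add hq₂, hc₁.add hc₂, ?_, ?_⟩
    · filter_upwards [Lp.coeFn_add f₁ f₂, hf₁, hf₂] with x h1 h2 h3
      show (⇑(f₁ + f₂)) x = _
      rw [h1]; simp [h2, h3]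
    · filter_upwards [Lp.coeFn_add g₁ g₂, hg₁, hg₂] with x h1 h2 h3
      show (⇑(g₁ + g₂)) x = _
      rw [h1, lExpr_add]; simp [h2, h3]
  smul_mem' := by
    rintro c ⟨f, g⟩ ⟨u, u', w, hq, hc, hf, hg⟩
    refine ⟨fun x => c * u x, fun x => c * u' x, fun x => c * w x, hq.smul c,
      hc.mono ?_, ?_, ?_⟩
    · intro x hx
      simp only [Function.mem_support, ne_eq] at hx ⊢
      exact fun h => hx (by rw [h, mul_zero])
    · filter_upwards [Lp.coeFn_smul c f, hf] with x h1 h2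
      show (⇑(c • f)) x = _
      rw [h1]; simp [h2]
    · filter_upwards [Lp.coeFn_smul c g, hg] with x h1 h2
      show (⇑(c • g)) x = _
      rw [h1, lExpr_smul]; simp [h2]

/-- The maximal operator `L`, an unbounded operator in `L²(ℝ)`. -/
def maxOp (p Q s r : ℝ → ℝ) : Hsp →ₗ.[ℂ] Hsp := (maxGraph p Q s r).toLinearPMap

/-- The preminimal operator `L₀₀`, the restriction of `L` to compactly supported functions. -/
def preminOp (p Q s r : ℝ → ℝ) : Hsp →ₗ.[ℂ] Hsp := (preminGraph p Q s r).toLinearPMap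

/-- The minimal operator `L₀`, the closure of `L₀₀`. -/
def minOp (p Q s r : ℝ → ℝ) : Hsp →ₗ.[ℂ] Hsp := (preminOp p Q s r).closure

/-- The boundary bilinear form `[u,v](t) = u(t)·conj(v^{[1]}(t)) − u^{[1]}(t)·conj(v(t))`. -/
def brkt (p Q r : ℝ → ℝ) (u u' v v' : ℝ → ℂ) (t : ℝ) : ℂ :=
  u t * (starRingEnd ℂ) (qd1 p Q r v v' t) - qd1 p Q r u u' t * (starRingEnd ℂ) (v t)

/-- `u, u', w` is a concrete representative of `f` as a member of `Dom(L)`: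
`u` is a representative of the `L²`-class `f`, `u` and `u^{[1]}` are locally absolutely
continuous (with derivatives `u'` and `w` respectively) and `l[u] ∈ L²(ℝ)`. -/
def IsMaxRep (p Q s r : ℝ → ℝ) (f : Hsp) (u u' w : ℝ → ℂ) : Prop :=
  QDom p Q s r u u' w ∧ (⇑f =ᵐ[volume] u) ∧ MemLp (lExpr p Q s r u u' w) 2 volume

/-- Function-level membership in the domain of the preminimal operator `L₀₀`:
`v` and `v^{[1]}` are locally absolutely continuous, `v, l[v] ∈ L²(ℝ)` and `v` has
compact support. -/
def MemPremin (p Q s r : ℝ → ℝ) (v : ℝ → ℂ) : Prop :=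
  ∃ v' w : ℝ → ℂ, QDom p Q s r v v' w ∧ MemLp v 2 volume ∧
    MemLp (lExpr p Q s r v v' w) 2 volume ∧ HasCompactSupport v

/-- `p ∈ W¹_{2,loc}(ℝ)` (for a real-valued function), with weak derivative `p' ∈ L²_loc`. -/
def W12locR (p p' : ℝ → ℝ) : Prop :=
  LocallyIntegrable p' volume ∧ LocallyIntegrable (fun x => (p' x) ^ 2) volume ∧
  ∀ x : ℝ, p x = p 0 + ∫ t in (0:ℝ)..x, p' t

/-- `φ ∈ W²₂(ℝ)` with compact support: `φ, φ', φ'' ∈ L²(ℝ)` where `φ'` and `φ''` are the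
first and second weak derivatives of `φ`, and `supp φ` is compact. -/
def W22cs (φ φ' φ'' : ℝ → ℝ) : Prop :=
  LocallyIntegrable φ' volume ∧ LocallyIntegrable φ'' volume ∧
  MemLp φ 2 volume ∧ MemLp φ' 2 volume ∧ MemLp φ'' 2 volume ∧
  (∀ x : ℝ, φ x = φ 0 + ∫ t in (0:ℝ)..x, φ' t) ∧
  (∀ x : ℝ, φ' x = φ' 0 + ∫ t in (0:ℝ)..x, φ'' t) ∧
  HasCompactSupport φ

/-- `p ∈ W¹₂([α,β]) = H¹([α,β])` with weak derivative `p'` on the interval `[α,β]`. -/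
def W12OnIcc (p p' : ℝ → ℝ) (α β : ℝ) : Prop :=
  IntegrableOn p' (Set.Icc α β) volume ∧ MemLp p' 2 (volume.restrict (Set.Icc α β)) ∧
  ∀ x ∈ Set.Icc α β, p x = p α + ∫ t in α..x, p' t


section AuxLemmas

open intervalIntegral Topology

/-- A primitive of a locally integrable function is continuous. -/
lemma continuous_of_primitive {E : Type*} [NormedAddCommGroup E] [NormedSpace ℝ E]
    {f F : ℝ → E} (hf : LocallyIntegrable f volume)
    (hF : ∀ x : ℝ, F x = F 0 + ∫ t in (0:ℝ)..x, f t) : Continuous F := by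
  have h : Continuous fun x : ℝ => F 0 + ∫ t in (0:ℝ)..x, f t :=
    continuous_const.add (intervalIntegral.continuous_primitive
      (fun a b => (hf.integrableOn_isCompact isCompact_uIcc).intervalIntegrable) 0)
  exact h.congr fun x => (hF x).symm

lemma HasLocDeriv.continuous {u g : ℝ → ℂ} (h : HasLocDeriv u g) : Continuous u :=
  continuous_of_primitive h.1 h.2

lemma MeasureTheory.LocallyIntegrable.mul_cont {g v : ℝ → ℂ} (hg : LocallyIntegrable g volume)
    (hv : Continuous v) : LocallyIntegrable (fun x => g x * v x) volume := by
  rw [MeasureTheory.locallyIntegrable_iff] at hg ⊢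
  exact fun K hK => (hg K hK).mul_continuousOn hv.continuousOn hK

lemma MeasureTheory.LocallyIntegrable.cont_mul {g v : ℝ → ℂ} (hg : LocallyIntegrable g volume)
    (hv : Continuous v) : LocallyIntegrable (fun x => v x * g x) volume := by
  rw [MeasureTheory.locallyIntegrable_iff] at hg ⊢
  exact fun K hK => IntegrableOn.continuousOn_mul hv.continuousOn (hg K hK) hK

lemma integral_primitive_mul_le {g h : ℝ → ℂ} (hg : LocallyIntegrable g volume)
    (hh : LocallyIntegrable h volume) {a b : ℝ} (hab : a ≤ b) :
    ∫ t in a..b, (g t * (∫ s' in a..t, h s') + (∫ s' in a..t, g s') * h t)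
      = (∫ t in a..b, g t) * (∫ t in a..b, h t) := by
  have hgi : ∀ c d : ℝ, IntervalIntegrable g volume c d := fun c d =>
    (hg.integrableOn_isCompact isCompact_uIcc).intervalIntegrable
  have hhi : ∀ c d : ℝ, IntervalIntegrable h volume c d := fun c d =>
    (hh.integrableOn_isCompact isCompact_uIcc).intervalIntegrable
  have hGc : Continuous fun t => ∫ s' in a..t, g s' :=
    intervalIntegral.continuous_primitive (fun c d => hgi c d) a
  have hHc : Continuous fun t => ∫ s' in a..t, h s' :=
    intervalIntegral.continuous_primitive (fun c d => hhi c d) a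
  set S := Set.Ioc a b with hSdef
  have hSm : MeasurableSet S := measurableSet_Ioc
  have hgS : IntegrableOn g S volume := (hgi a b).1
  have hhS : IntegrableOn h S volume := (hhi a b).1
  set F : ℝ → ℝ → ℂ := fun t s' => if s' ≤ t then g t * h s' else 0 with hFdef
  have hFint : Integrable (Function.uncurry F)
      ((volume.restrict S).prod (volume.restrict S)) := by
    have hbase : Integrable (fun q : ℝ × ℝ => g q.1 * h q.2)
        ((volume.restrict S).prod (volume.restrict S)) := Integrable.mul_prod hgS hhS
    have heq : Function.uncurry F
        = {q : ℝ × ℝ | q.2 ≤ q.1}.indicator fun q => g q.1 * h q.2 := by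
      funext q
      by_cases hq : q.2 ≤ q.1
      · simp [Function.uncurry, hFdef, hq, Set.indicator_of_mem, Set.mem_setOf_eq]
      · simp [Function.uncurry, hFdef, hq, Set.indicator_of_notMem, Set.mem_setOf_eq]
    rw [heq]
    exact hbase.indicator (measurableSet_le measurable_snd measurable_fst)
  have hswap : (∫ t in S, ∫ s' in S, F t s') = ∫ s' in S, ∫ t in S, F t s' :=
    MeasureTheory.integral_integral_swap hFint
  have hT1 : ∀ t ∈ S, g t * (∫ s' in a..t, h s') = ∫ s' in S, F t s' := by
    intro t ht
    have h1 : (∫ s' in S, F t s') = ∫ s' in S ∩ Set.Iic t, g t * h s' := by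
      rw [← MeasureTheory.setIntegral_indicator measurableSet_Iic]
      refine setIntegral_congr_fun hSm fun s' _ => ?_
      simp [hFdef, Set.indicator_apply, Set.mem_Iic]
    have h2 : S ∩ Set.Iic t = Set.Ioc a t := by
      ext y
      simp only [hSdef, Set.mem_inter_iff, Set.mem_Ioc, Set.mem_Iic]
      exact ⟨fun hy => ⟨hy.1.1, hy.2⟩, fun hy => ⟨⟨hy.1, hy.2.trans ht.2⟩, hy.2⟩⟩
    rw [h1, h2, MeasureTheory.integral_const_mul, ← intervalIntegral.integral_of_le ht.1.le]
  have hT2 : ∀ s' ∈ S, (∫ t in S, F t s') = (∫ t in s'..b, g t) * h s' := by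
    intro s' hs'
    have h1 : (∫ t in S, F t s') = ∫ t in S ∩ Set.Ici s', g t * h s' := by
      rw [← MeasureTheory.setIntegral_indicator measurableSet_Ici]
      refine setIntegral_congr_fun hSm fun t _ => ?_
      simp [hFdef, Set.indicator_apply, Set.mem_Ici]
    have h2 : S ∩ Set.Ici s' = Set.Icc s' b := by
      ext y
      simp only [hSdef, Set.mem_inter_iff, Set.mem_Ioc, Set.mem_Ici, Set.mem_Icc]
      exact ⟨fun hy => ⟨hy.2, hy.1.2⟩, fun hy => ⟨⟨hs'.1.trans_le hy.1, hy.2⟩, hy.1⟩⟩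
    rw [h1, h2, MeasureTheory.integral_Icc_eq_integral_Ioc, MeasureTheory.integral_mul_const,
      ← intervalIntegral.integral_of_le hs'.2]
  have hint1 : IntegrableOn (fun t => g t * ∫ s' in a..t, h s') S volume :=
    hgS.mul_continuousOn_of_subset hHc.continuousOn hSm isCompact_Icc Set.Ioc_subset_Icc_self
  have hint2 : IntegrableOn (fun t => (∫ s' in a..t, g s') * h t) S volume :=
    IntegrableOn.continuousOn_mul_of_subset hGc.continuousOn hhS isCompact_Icc hSm
      Set.Ioc_subset_Icc_self
  have hcont3 : Continuous fun t => ∫ s' in t..b, g s' := by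
    have heq : ∀ t, (∫ s' in t..b, g s') = (∫ s' in a..b, g s') - ∫ s' in a..t, g s' := fun t =>
      (intervalIntegral.integral_interval_sub_left (hgi a b) (hgi a t)).symm
    exact (continuous_const.sub hGc).congr fun t => (heq t).symm
  have hint3 : IntegrableOn (fun t => (∫ s' in t..b, g s') * h t) S volume :=
    IntegrableOn.continuousOn_mul_of_subset hcont3.continuousOn hhS isCompact_Icc hSm
      Set.Ioc_subset_Icc_self
  calc ∫ t in a..b, (g t * (∫ s' in a..t, h s') + (∫ s' in a..t, g s') * h t)
      = ∫ t in S, (g t * (∫ s' in a..t, h s') + (∫ s' in a..t, g s') * h t) :=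
        intervalIntegral.integral_of_le hab
    _ = (∫ t in S, g t * ∫ s' in a..t, h s') + ∫ t in S, (∫ s' in a..t, g s') * h t :=
        MeasureTheory.integral_add hint1 hint2
    _ = (∫ t in S, ∫ s' in S, F t s') + ∫ t in S, (∫ s' in a..t, g s') * h t := by
        congr 1
        exact setIntegral_congr_fun hSm fun t ht => hT1 t ht
    _ = (∫ s' in S, ∫ t in S, F t s') + ∫ s' in S, (∫ t in a..s', g t) * h s' := by
        rw [hswap]
    _ = (∫ s' in S, (∫ t in s'..b, g t) * h s') + ∫ s' in S, (∫ t in a..s', g t) * h s' := by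
        congr 1
        exact setIntegral_congr_fun hSm fun s' hs' => hT2 s' hs'
    _ = ∫ s' in S, ((∫ t in s'..b, g t) * h s' + (∫ t in a..s', g t) * h s') :=
        (MeasureTheory.integral_add hint3 hint2).symm
    _ = ∫ s' in S, (∫ t in a..b, g t) * h s' := by
        refine setIntegral_congr_fun hSm fun s' _ => ?_
        rw [← add_mul, add_comm, intervalIntegral.integral_add_adjacent_intervals
          (hgi a s') (hgi s' b)]
    _ = (∫ t in a..b, g t) * ∫ s' in S, h s' := MeasureTheory.integral_const_mul _ _
    _ = (∫ t in a..b, g t) * ∫ t in a..b, h t := by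
        congr 1
        exact (intervalIntegral.integral_of_le hab).symm

lemma integral_primitive_mul {g h : ℝ → ℂ} (hg : LocallyIntegrable g volume)
    (hh : LocallyIntegrable h volume) (a b : ℝ) :
    ∫ t in a..b, (g t * (∫ s' in a..t, h s') + (∫ s' in a..t, g s') * h t)
      = (∫ t in a..b, g t) * (∫ t in a..b, h t) := by
  rcases le_total a b with hab | hba
  · exact integral_primitive_mul_le hg hh hab
  · have hgi : ∀ c d : ℝ, IntervalIntegrable g volume c d := fun c d =>
      (hg.integrableOn_isCompact isCompact_uIcc).intervalIntegrable
    have hhi : ∀ c d : ℝ, IntervalIntegrable h volume c d := fun c d =>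
      (hh.integrableOn_isCompact isCompact_uIcc).intervalIntegrable
    have hGc : Continuous fun t => ∫ s' in a..t, g s' :=
      intervalIntegral.continuous_primitive (fun c d => hgi c d) a
    have hHc : Continuous fun t => ∫ s' in a..t, h s' :=
      intervalIntegral.continuous_primitive (fun c d => hhi c d) a
    have key := integral_primitive_mul_le hg hh hba
    set X := ∫ t in a..b, g t with hX
    set Y := ∫ t in a..b, h t with hY
    have hGbt : ∀ t, (∫ s' in b..t, g s') = -X + ∫ s' in a..t, g s' := fun t => by
      rw [← intervalIntegral.integral_add_adjacent_intervals (hgi b a) (hgi a t),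
        intervalIntegral.integral_symm, hX]
    have hHbt : ∀ t, (∫ s' in b..t, h s') = -Y + ∫ s' in a..t, h s' := fun t => by
      rw [← intervalIntegral.integral_add_adjacent_intervals (hhi b a) (hhi a t),
        intervalIntegral.integral_symm, hY]
    have hexp : Set.EqOn (fun t => g t * (∫ s' in b..t, h s') + (∫ s' in b..t, g s') * h t)
        (fun t => (g t * (-Y) + (-X) * h t)
          + (g t * (∫ s' in a..t, h s') + (∫ s' in a..t, g s') * h t)) (Set.uIcc b a) := by
      intro t _
      simp only
      rw [hGbt t, hHbt t]
      ring
    rw [intervalIntegral.integral_congr hexp] at key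
    have i1 : IntervalIntegrable (fun t => g t * (-Y) + (-X) * h t) volume b a :=
      ((hgi b a).mul_const _).add ((hhi b a).const_mul _)
    have i2 : IntervalIntegrable
        (fun t => g t * (∫ s' in a..t, h s') + (∫ s' in a..t, g s') * h t) volume b a :=
      ((hgi b a).mul_continuousOn hHc.continuousOn).add
        ((hhi b a).continuousOn_mul hGc.continuousOn)
    rw [intervalIntegral.integral_add i1 i2] at key
    have e1 : (∫ t in b..a, (g t * (-Y) + (-X) * h t)) = X * Y + X * Y := by
      rw [intervalIntegral.integral_add ((hgi b a).mul_const _) ((hhi b a).const_mul _),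
        intervalIntegral.integral_mul_const, intervalIntegral.integral_const_mul,
        intervalIntegral.integral_symm, intervalIntegral.integral_symm (a := a) (b := b), ← hX, ← hY]
      ring
    have e2 : (∫ t in b..a, g t) = -X := by rw [intervalIntegral.integral_symm, hX]
    have e3 : (∫ t in b..a, h t) = -Y := by rw [intervalIntegral.integral_symm, hY]
    have e4 : (∫ t in b..a,
        (g t * (∫ s' in a..t, h s') + (∫ s' in a..t, g s') * h t))
        = -∫ t in a..b, (g t * (∫ s' in a..t, h s') + (∫ s' in a..t, g s') * h t) := by
      rw [intervalIntegral.integral_symm]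
    rw [e1, e2, e3, e4] at key
    linear_combination -key

lemma HasLocDeriv.mul {u g v h : ℝ → ℂ} (hu : HasLocDeriv u g) (hv : HasLocDeriv v h) :
    HasLocDeriv (fun x => u x * v x) (fun x => g x * v x + u x * h x) := by
  have huc := hu.continuous
  have hvc := hv.continuous
  have hGc : Continuous fun t => ∫ s' in (0:ℝ)..t, g s' :=
    intervalIntegral.continuous_primitive (fun c d => hu.intervalIntegrable c d) 0
  have hHc : Continuous fun t => ∫ s' in (0:ℝ)..t, h s' :=
    intervalIntegral.continuous_primitive (fun c d => hv.intervalIntegrable c d) 0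
  refine ⟨(hu.1.mul_cont hvc).add (hv.1.cont_mul huc), fun x => ?_⟩
  show u x * v x = u 0 * v 0 + ∫ t in (0:ℝ)..x, (g t * v t + u t * h t)
  have hexp : Set.EqOn (fun t => g t * v t + u t * h t)
      (fun t => (g t * v 0 + u 0 * h t)
        + (g t * (∫ s' in (0:ℝ)..t, h s') + (∫ s' in (0:ℝ)..t, g s') * h t))
      (Set.uIcc (0:ℝ) x) := by
    intro t _
    simp only
    rw [hv.2 t, hu.2 t]
    ring
  rw [intervalIntegral.integral_congr hexp]
  have i1 : IntervalIntegrable (fun t => g t * v 0 + u 0 * h t) volume 0 x :=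
    ((hu.intervalIntegrable 0 x).mul_const _).add ((hv.intervalIntegrable 0 x).const_mul _)
  have i2 : IntervalIntegrable
      (fun t => g t * (∫ s' in (0:ℝ)..t, h s') + (∫ s' in (0:ℝ)..t, g s') * h t) volume 0 x :=
    ((hu.intervalIntegrable 0 x).mul_continuousOn hHc.continuousOn).add
      ((hv.intervalIntegrable 0 x).continuousOn_mul hGc.continuousOn)
  rw [intervalIntegral.integral_add i1 i2,
    intervalIntegral.integral_add ((hu.intervalIntegrable 0 x).mul_const _)
      ((hv.intervalIntegrable 0 x).const_mul _),
    intervalIntegral.integral_mul_const, intervalIntegral.integral_const_mul,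
    integral_primitive_mul hu.1 hv.1 0 x, hu.2 x, hv.2 x]
  ring

lemma hasLocDeriv_ofReal {f f' : ℝ → ℝ} (h1 : LocallyIntegrable f' volume)
    (h2 : ∀ x : ℝ, f x = f 0 + ∫ t in (0:ℝ)..x, f' t) :
    HasLocDeriv (fun x => (f x : ℂ)) (fun x => (f' x : ℂ)) := by
  have hli : LocallyIntegrable (fun x => ((f' x : ℝ) : ℂ)) volume := by
    rw [MeasureTheory.locallyIntegrable_iff] at h1 ⊢
    exact fun K hK => (h1 K hK).ofReal
  refine ⟨hli, fun x => ?_⟩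
  show (f x : ℂ) = (f 0 : ℂ) + ∫ t in (0:ℝ)..x, (f' t : ℂ)
  rw [intervalIntegral.integral_ofReal]
  exact_mod_cast h2 x

lemma ae_zero_of_interval_integral_zero {E : Type*} [NormedAddCommGroup E] [NormedSpace ℝ E]
    [CompleteSpace E] {g : ℝ → E}
    (hg : LocallyIntegrable g volume) {S : Set ℝ} (hS : IsOpen S)
    (h : ∀ c d : ℝ, c ≤ d → Set.Icc c d ⊆ S → ∫ t in c..d, g t = 0) :
    ∀ᵐ x : ℝ, x ∈ S → g x = 0 := by
  filter_upwards [IsUnifLocDoublingMeasure.ae_tendsto_average (μ := (volume : Measure ℝ)) hg 1]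
    with x hx hxS
  obtain ⟨ε, hε, hball⟩ := Metric.isOpen_iff.1 hS x hxS
  have hev : ∀ᶠ δ : ℝ in 𝓝[>] (0:ℝ), x ∈ Metric.closedBall x (1 * δ) := by
    filter_upwards [self_mem_nhdsWithin] with δ hδ
    exact Metric.mem_closedBall_self (by simp only [one_mul]; exact le_of_lt hδ)
  have htend := hx (fun _ : ℝ => x) (fun δ : ℝ => δ) Filter.tendsto_id hev
  have hzero : (fun δ : ℝ => ⨍ y in Metric.closedBall x δ, g y ∂volume)
      =ᶠ[𝓝[>] (0:ℝ)] fun _ => 0 := by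
    filter_upwards [Ioo_mem_nhdsGT_of_mem (Set.left_mem_Ico.2 (half_pos hε))] with δ hδ
    have hsub : Metric.closedBall x δ ⊆ S :=
      (Metric.closedBall_subset_ball (by linarith [hδ.2])).trans hball
    have hIcc : Set.Icc (x - δ) (x + δ) ⊆ S := by
      rw [← Real.closedBall_eq_Icc]
      exact hsub
    rw [MeasureTheory.setAverage_eq, Real.closedBall_eq_Icc,
      MeasureTheory.integral_Icc_eq_integral_Ioc,
      ← intervalIntegral.integral_of_le (by linarith [hδ.1]),
      h (x - δ) (x + δ) (by linarith [hδ.1]) hIcc, smul_zero]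
  have h0 : Filter.Tendsto (fun δ : ℝ => ⨍ y in Metric.closedBall x δ, g y ∂volume)
      (𝓝[>] (0:ℝ)) (𝓝 0) := (Filter.tendsto_congr' hzero).2 tendsto_const_nhds
  exact tendsto_nhds_unique htend h0

lemma ae_deriv_zero_outside {f f' : ℝ → ℝ} (hli : LocallyIntegrable f' volume)
    (hid : ∀ x : ℝ, f x = f 0 + ∫ t in (0:ℝ)..x, f' t) {R : ℝ}
    (hf0 : ∀ x : ℝ, x ∉ Set.Icc (-R) R → f x = 0) :
    ∀ᵐ x : ℝ, x ∉ Set.Icc (-R) R → f' x = 0 := by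
  have hig : ∀ c d : ℝ, IntervalIntegrable f' volume c d := fun c d =>
    (hli.integrableOn_isCompact isCompact_uIcc).intervalIntegrable
  refine ae_zero_of_interval_integral_zero hli isClosed_Icc.isOpen_compl fun c d hcd hsub => ?_
  have hfc : f c = 0 := hf0 c (hsub (Set.left_mem_Icc.2 hcd))
  have hfd : f d = 0 := hf0 d (hsub (Set.right_mem_Icc.2 hcd))
  have : (∫ t in (0:ℝ)..d, f' t) - ∫ t in (0:ℝ)..c, f' t = ∫ t in c..d, f' t :=
    intervalIntegral.integral_interval_sub_left (hig 0 d) (hig 0 c)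
  have hd := hid d
  have hc := hid c
  rw [hfd] at hd
  rw [hfc] at hc
  rw [← this]
  linarith

lemma deriv_zero_outside {f f' : ℝ → ℝ} (hli : LocallyIntegrable f' volume)
    (hid : ∀ x : ℝ, f x = f 0 + ∫ t in (0:ℝ)..x, f' t) (hc' : Continuous f') {R : ℝ}
    (hf0 : ∀ x : ℝ, x ∉ Set.Icc (-R) R → f x = 0) :
    ∀ x : ℝ, x ∉ Set.Icc (-R) R → f' x = 0 := by
  have hae := ae_deriv_zero_outside hli hid hf0
  have hS : IsOpen (Set.Icc (-R) R)ᶜ := isClosed_Icc.isOpen_compl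
  have hres : f' =ᵐ[volume.restrict (Set.Icc (-R) R)ᶜ] (fun _ => 0) := by
    rw [Filter.EventuallyEq, MeasureTheory.ae_restrict_iff' hS.measurableSet]
    filter_upwards [hae] with x hx hxc
    exact hx hxc
  have := MeasureTheory.Measure.eqOn_of_ae_eq hres hc'.continuousOn continuousOn_const
    (by rw [hS.interior_eq]; exact subset_closure)
  exact fun x hx => this hx

lemma exists_global_bound {f : ℝ → ℂ} (hf : Continuous f) {K : Set ℝ} (hK : IsCompact K)
    (h0 : ∀ x ∉ K, f x = 0) : ∃ C : ℝ, 0 ≤ C ∧ ∀ x, ‖f x‖ ≤ C := by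
  obtain ⟨C, hC⟩ := hK.exists_bound_of_continuousOn hf.continuousOn
  refine ⟨max C 0, le_max_right _ _, fun x => ?_⟩
  by_cases hx : x ∈ K
  · exact (hC x hx).trans (le_max_left _ _)
  · simp [h0 x hx]

end AuxLemmas

set_option maxHeartbeats 1000000 in
/-- Suppose in addition `p > 0` and `p ∈ W¹_{2,loc}(ℝ)`. Then for every
compactly supported `φ ∈ W²₂(ℝ)` and every `u ∈ Dom(L)`, the product `φ·u` belongs to
`Dom(L₀₀)`: `φu` and `(φu)^{[1]}` are locally absolutely continuous, `l[φu] ∈ L²(ℝ)` and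
`supp(φu)` is compact. -/
theorem cutoff_mul_mem_premin (p Q s r : ℝ → ℝ) (hc : Coeffs p Q s r)
    (p' : ℝ → ℝ) (hpW : W12locR p p') (hppos : ∀ x : ℝ, 0 < p x)
    (φ φ' φ'' : ℝ → ℝ) (hφ : W22cs φ φ' φ'')
    (u u' w : ℝ → ℂ) (hq : QDom p Q s r u u' w) (hu2 : MemLp u 2 volume)
    (hl2 : MemLp (lExpr p Q s r u u' w) 2 volume) :
    MemPremin p Q s r (fun x => (φ x : ℂ) * u x) := by
  classical
  obtain ⟨hφ'li, hφ''li, hφ2, hφ'2, hφ''2, hφid, hφ'id, hφcs⟩ := hφ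
  obtain ⟨hp'li, hp'sq, hpid⟩ := hpW
  have hu_c : Continuous u := hq.1.continuous
  have hk_c : Continuous (qd1 p Q r u u') := hq.2.continuous
  have hp_c : Continuous p := continuous_of_primitive hp'li hpid
  have hφ_c : Continuous φ := continuous_of_primitive hφ'li hφid
  have hφ'_c : Continuous φ' := continuous_of_primitive hφ''li hφ'id
  -- a compact interval containing the support of φ
  obtain ⟨r0, hr0⟩ := hφcs.isBounded.subset_closedBall (0:ℝ)
  set R : ℝ := max r0 0 with hRdef
  have hKsub : tsupport φ ⊆ Set.Icc (-R) R := by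
    refine hr0.trans ?_
    rw [Real.closedBall_eq_Icc]
    exact Set.Icc_subset_Icc (by simp only [hRdef, zero_sub, neg_le_neg_iff]; exact le_max_left _ _)
      (by simp only [hRdef, zero_add]; exact le_max_left _ _)
  have hKm : MeasurableSet (Set.Icc (-R) R) := measurableSet_Icc
  have hφK : ∀ x : ℝ, x ∉ Set.Icc (-R) R → φ x = 0 := fun x hx =>
    image_eq_zero_of_notMem_tsupport fun hmem => hx (hKsub hmem)
  have hφ'K : ∀ x : ℝ, x ∉ Set.Icc (-R) R → φ' x = 0 :=
    deriv_zero_outside hφ'li hφid hφ'_c hφK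
  have hφ''K : ∀ᵐ x : ℝ, x ∉ Set.Icc (-R) R → φ'' x = 0 :=
    ae_deriv_zero_outside hφ''li hφ'id hφ'K
  -- quasi-derivative structure of φ·u
  have hGd : HasLocDeriv (fun x => (φ x : ℂ)) (fun x => (φ' x : ℂ)) :=
    hasLocDeriv_ofReal hφ'li hφid
  have hG'd : HasLocDeriv (fun x => (φ' x : ℂ)) (fun x => (φ'' x : ℂ)) :=
    hasLocDeriv_ofReal hφ''li hφ'id
  have hPd : HasLocDeriv (fun x => (p x : ℂ)) (fun x => (p' x : ℂ)) :=
    hasLocDeriv_ofReal hp'li hpid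
  have h1 : HasLocDeriv (fun x => (φ x : ℂ) * u x)
      (fun x => (φ' x : ℂ) * u x + (φ x : ℂ) * u' x) := hGd.mul hq.1
  have hm : HasLocDeriv (fun x => (p x : ℂ) * (φ' x : ℂ))
      (fun x => (p' x : ℂ) * (φ' x : ℂ) + (p x : ℂ) * (φ'' x : ℂ)) := hPd.mul hG'd
  have hmu : HasLocDeriv (fun x => ((p x : ℂ) * (φ' x : ℂ)) * u x)
      (fun x => ((p' x : ℂ) * (φ' x : ℂ) + (p x : ℂ) * (φ'' x : ℂ)) * u x
        + ((p x : ℂ) * (φ' x : ℂ)) * u' x) := hm.mul hq.1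
  have hGq : HasLocDeriv (fun x => (φ x : ℂ) * qd1 p Q r u u' x)
      (fun x => (φ' x : ℂ) * qd1 p Q r u u' x + (φ x : ℂ) * w x) := hGd.mul hq.2
  have hsum := hGq.add hmu
  have h2 : HasLocDeriv
      (qd1 p Q r (fun x => (φ x : ℂ) * u x) (fun x => (φ' x : ℂ) * u x + (φ x : ℂ) * u' x))
      (fun x => ((φ' x : ℂ) * qd1 p Q r u u' x + (φ x : ℂ) * w x)
        + (((p' x : ℂ) * (φ' x : ℂ) + (p x : ℂ) * (φ'' x : ℂ)) * u x
          + ((p x : ℂ) * (φ' x : ℂ)) * u' x)) := by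
    refine hsum.congr_fun fun x => ?_
    simp only [qd1]
    ring
  have hQD : QDom p Q s r (fun x => (φ x : ℂ) * u x)
      (fun x => (φ' x : ℂ) * u x + (φ x : ℂ) * u' x)
      (fun x => ((φ' x : ℂ) * qd1 p Q r u u' x + (φ x : ℂ) * w x)
        + (((p' x : ℂ) * (φ' x : ℂ) + (p x : ℂ) * (φ'' x : ℂ)) * u x
          + ((p x : ℂ) * (φ' x : ℂ)) * u' x)) := ⟨h1, h2⟩
  have hp0 : ∀ x : ℝ, (p x : ℂ) ≠ 0 := fun x => by exact_mod_cast (hppos x).ne'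
  -- pointwise formula for l[φu]
  have hlid : ∀ x : ℝ, lExpr p Q s r (fun y => (φ y : ℂ) * u y)
      (fun y => (φ' y : ℂ) * u y + (φ y : ℂ) * u' y)
      (fun y => ((φ' y : ℂ) * qd1 p Q r u u' y + (φ y : ℂ) * w y)
        + (((p' y : ℂ) * (φ' y : ℂ) + (p y : ℂ) * (φ'' y : ℂ)) * u y
          + ((p y : ℂ) * (φ' y : ℂ)) * u' y)) x
      = (φ x : ℂ) * lExpr p Q s r u u' w x
        + (-2 : ℂ) * ((φ' x : ℂ) * qd1 p Q r u u' x)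
        + (-1 : ℂ) * ((p' x : ℂ) * (φ' x : ℂ) * u x)
        + (-1 : ℂ) * ((p x : ℂ) * (φ'' x : ℂ) * u x)
        + (-1 : ℂ) * (2 * (Q x : ℂ) * (φ' x : ℂ) * u x) := by
    intro x
    simp only [lExpr, qd1]
    field_simp [hp0 x]
    ring
  -- bounds
  obtain ⟨C₁, hC₁0, hC₁⟩ := exists_global_bound (f := fun x => (φ x : ℂ))
    (K := Set.Icc (-R) R) (Complex.continuous_ofReal.comp hφ_c) isCompact_Icc
    (fun x hx => by simp [hφK x hx])
  obtain ⟨C₂, hC₂0, hC₂⟩ := exists_global_bound (f := fun x => (φ' x : ℂ) * u x)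
    (K := Set.Icc (-R) R) ((Complex.continuous_ofReal.comp hφ'_c).mul hu_c) isCompact_Icc
    (fun x hx => by simp [hφ'K x hx])
  have hcont3' : Continuous fun x : ℝ => (p x : ℂ) * u x :=
    (Complex.continuous_ofReal.comp hp_c).mul hu_c
  obtain ⟨C₃, hC₃⟩ := isCompact_Icc.exists_bound_of_continuousOn hcont3'.continuousOn
  -- membership facts
  have hu'm : AEStronglyMeasurable u' volume := hq.1.1.aestronglyMeasurable
  have hum : AEStronglyMeasurable u volume := hu_c.aestronglyMeasurable
  have hφm : AEStronglyMeasurable (fun x => (φ x : ℂ)) volume :=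
    (Complex.continuous_ofReal.comp hφ_c).aestronglyMeasurable
  have hφ'm : AEStronglyMeasurable (fun x => (φ' x : ℂ)) volume :=
    (Complex.continuous_ofReal.comp hφ'_c).aestronglyMeasurable
  have hp'm : AEStronglyMeasurable (fun x => (p' x : ℂ)) volume :=
    Complex.continuous_ofReal.comp_aestronglyMeasurable hp'li.aestronglyMeasurable
  -- Memℒp of each term
  have hA1 : MemLp (fun x => (φ x : ℂ) * lExpr p Q s r u u' w x) 2 volume := by
    have hb : ∀ x : ℝ, ‖(φ x : ℂ) * lExpr p Q s r u u' w x‖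
        ≤ C₁ * ‖lExpr p Q s r u u' w x‖ := fun x => by
      rw [norm_mul]
      exact mul_le_mul_of_nonneg_right (hC₁ x) (norm_nonneg _)
    exact MemLp.of_le_mul (c := C₁) hl2 (hφm.mul hl2.aestronglyMeasurable)
      (MeasureTheory.ae_of_all _ hb)
  have hA2 : MemLp (fun x => (-2 : ℂ) * ((φ' x : ℂ) * qd1 p Q r u u' x)) 2 volume := by
    refine Continuous.memLp_of_hasCompactSupport
      (continuous_const.mul ((Complex.continuous_ofReal.comp hφ'_c).mul hk_c)) ?_
    exact HasCompactSupport.intro (isCompact_Icc (a := -R) (b := R)) fun x hx => by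
      simp [hφ'K x hx]
  have hA3 : MemLp (fun x => (-1 : ℂ) * ((p' x : ℂ) * (φ' x : ℂ) * u x)) 2 volume := by
    have hgmem : MemLp ((Set.Icc (-R) R).indicator p') 2 volume := by
      have haesm : AEStronglyMeasurable ((Set.Icc (-R) R).indicator p') volume :=
        hp'li.aestronglyMeasurable.indicator hKm
      rw [memLp_two_iff_integrable_sq haesm]
      have heq : (fun x => ((Set.Icc (-R) R).indicator p' x) ^ 2)
          = (Set.Icc (-R) R).indicator fun x => (p' x) ^ 2 := by
        funext x
        by_cases hx : x ∈ Set.Icc (-R) R <;> simp [hx]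
      rw [heq]
      exact (hp'sq.integrableOn_isCompact isCompact_Icc).integrable_indicator hKm
    have hb : ∀ x : ℝ, ‖(-1 : ℂ) * ((p' x : ℂ) * (φ' x : ℂ) * u x)‖
        ≤ C₂ * ‖(Set.Icc (-R) R).indicator p' x‖ := by
      intro x
      by_cases hx : x ∈ Set.Icc (-R) R
      · rw [Set.indicator_of_mem hx]
        have h2' : ‖(φ' x : ℂ) * u x‖ ≤ C₂ := hC₂ x
        have hL : ‖(-1 : ℂ) * ((p' x : ℂ) * (φ' x : ℂ) * u x)‖
            = ‖(p' x : ℂ)‖ * ‖(φ' x : ℂ) * u x‖ := by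
          rw [norm_mul, norm_neg, norm_one, one_mul, mul_assoc, norm_mul]
        rw [hL]
        calc ‖(p' x : ℂ)‖ * ‖(φ' x : ℂ) * u x‖ ≤ ‖(p' x : ℂ)‖ * C₂ :=
              mul_le_mul_of_nonneg_left h2' (norm_nonneg _)
          _ = C₂ * ‖p' x‖ := by rw [Complex.norm_real]; ring
      · simp [hφ'K x hx, Set.indicator_of_notMem hx]
    exact MemLp.of_le_mul (c := C₂) hgmem
      (((hp'm.mul hφ'm).mul hum).const_mul _) (MeasureTheory.ae_of_all _ hb)
  have hA4 : MemLp (fun x => (-1 : ℂ) * ((p x : ℂ) * (φ'' x : ℂ) * u x)) 2 volume := by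
    have hφ''m : AEStronglyMeasurable (fun x => (φ'' x : ℂ)) volume :=
      Complex.continuous_ofReal.comp_aestronglyMeasurable hφ''li.aestronglyMeasurable
    have hφ''2c : MemLp (fun x => ((φ'' x : ℝ) : ℂ)) 2 volume := by
      refine MemLp.of_le hφ''2 hφ''m (MeasureTheory.ae_of_all _ fun x => ?_)
      rw [Complex.norm_real]
    have hpm : AEStronglyMeasurable (fun x => (p x : ℂ)) volume :=
      (Complex.continuous_ofReal.comp hp_c).aestronglyMeasurable
    have hb : ∀ᵐ x : ℝ ∂(volume : Measure ℝ), ‖(-1 : ℂ) * ((p x : ℂ) * (φ'' x : ℂ) * u x)‖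
        ≤ C₃ * ‖(fun y => ((φ'' y : ℝ) : ℂ)) x‖ := by
      filter_upwards [hφ''K] with x hx
      by_cases hxK : x ∈ Set.Icc (-R) R
      · have h3 := hC₃ x hxK
        have hL : ‖(-1 : ℂ) * ((p x : ℂ) * (φ'' x : ℂ) * u x)‖
            = ‖(p x : ℂ) * u x‖ * ‖(φ'' x : ℂ)‖ := by
          rw [norm_mul, norm_neg, norm_one, one_mul, norm_mul, norm_mul, norm_mul]
          ring
        rw [hL]
        exact mul_le_mul_of_nonneg_right h3 (norm_nonneg _)
      · rw [hx hxK]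
        simp
    exact MemLp.of_le_mul (c := C₃) hφ''2c
      (((hpm.mul hφ''m).mul hum).const_mul _) hb
  have hA5 : MemLp (fun x => (-1 : ℂ) * (2 * (Q x : ℂ) * (φ' x : ℂ) * u x)) 2 volume := by
    have hg3m : AEStronglyMeasurable
        ((Set.Icc (-R) R).indicator fun x => Q x / Real.sqrt (p x)) volume :=
      ((hc.meas_Q.div (Real.continuous_sqrt.measurable.comp hc.meas_p)).aestronglyMeasurable).indicator hKm
    have hg3mem : MemLp ((Set.Icc (-R) R).indicator fun x => Q x / Real.sqrt (p x)) 2 volume := by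
      rw [memLp_two_iff_integrable_sq hg3m]
      have heq : (fun x => ((Set.Icc (-R) R).indicator fun x => Q x / Real.sqrt (p x)) x ^ 2)
          = (Set.Icc (-R) R).indicator fun x => Q x ^ 2 / |p x| := by
        funext x
        by_cases hx : x ∈ Set.Icc (-R) R
        · simp only [Set.indicator_of_mem hx, div_pow, Real.sq_sqrt (hppos x).le,
            abs_of_pos (hppos x)]
        · simp [Set.indicator_of_notMem hx]
      rw [heq]
      exact (hc.hQ.integrableOn_isCompact isCompact_Icc).integrable_indicator hKm
    have hcont4 : Continuous fun x : ℝ => Real.sqrt (p x) * ‖2 * (φ' x : ℂ) * u x‖ := by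
      have h1 : Continuous fun x : ℝ => (φ' x : ℂ) := Complex.continuous_ofReal.comp hφ'_c
      fun_prop
    obtain ⟨C₄, hC₄⟩ := isCompact_Icc.exists_bound_of_continuousOn hcont4.continuousOn
    have hQm : AEStronglyMeasurable (fun x => (Q x : ℂ)) volume :=
      Complex.continuous_ofReal.comp_aestronglyMeasurable hc.meas_Q.aestronglyMeasurable
    have hb : ∀ x : ℝ, ‖(-1 : ℂ) * (2 * (Q x : ℂ) * (φ' x : ℂ) * u x)‖
        ≤ C₄ * ‖(Set.Icc (-R) R).indicator (fun y => Q y / Real.sqrt (p y)) x‖ := by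
      intro x
      by_cases hx : x ∈ Set.Icc (-R) R
      · have hsp : 0 < Real.sqrt (p x) := Real.sqrt_pos.2 (hppos x)
        have h5 : Real.sqrt (p x) * ‖2 * (φ' x : ℂ) * u x‖ ≤ C₄ :=
          (le_abs_self _).trans ((Real.norm_eq_abs _) ▸ hC₄ x hx)
        have hL : ‖(-1 : ℂ) * (2 * (Q x : ℂ) * (φ' x : ℂ) * u x)‖
            = |Q x| * ‖2 * (φ' x : ℂ) * u x‖ := by
          rw [norm_mul, norm_neg, norm_one, one_mul]
          rw [show (2 : ℂ) * (Q x : ℂ) * (φ' x : ℂ) * u x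
            = (Q x : ℂ) * (2 * (φ' x : ℂ) * u x) by ring]
          rw [norm_mul, Complex.norm_real, Real.norm_eq_abs]
        have hR : ‖((Set.Icc (-R) R).indicator fun x => Q x / Real.sqrt (p x)) x‖
            = |Q x| / Real.sqrt (p x) := by
          rw [Set.indicator_of_mem hx, Real.norm_eq_abs, abs_div,
            _root_.abs_of_nonneg (Real.sqrt_nonneg _)]
        rw [hL, hR]
        calc |Q x| * ‖2 * (φ' x : ℂ) * u x‖
            = (|Q x| / Real.sqrt (p x)) * (Real.sqrt (p x) * ‖2 * (φ' x : ℂ) * u x‖) := by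
              field_simp
          _ ≤ (|Q x| / Real.sqrt (p x)) * C₄ :=
              mul_le_mul_of_nonneg_left h5 (div_nonneg (abs_nonneg _) hsp.le)
          _ = C₄ * (|Q x| / Real.sqrt (p x)) := mul_comm _ _
      · simp [hφ'K x hx, Set.indicator_of_notMem hx]
    exact MemLp.of_le_mul (c := C₄) hg3mem
      ((((hQm.const_mul (2:ℂ)).mul hφ'm).mul hum).const_mul _)
      (MeasureTheory.ae_of_all _ hb)
  have hv2 : MemLp (fun x => (φ x : ℂ) * u x) 2 volume := by
    have hb : ∀ x : ℝ, ‖(φ x : ℂ) * u x‖ ≤ C₁ * ‖u x‖ := fun x => by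
      rw [norm_mul]
      exact mul_le_mul_of_nonneg_right (hC₁ x) (norm_nonneg _)
    exact MemLp.of_le_mul (c := C₁) hu2 (hφm.mul hum) (MeasureTheory.ae_of_all _ hb)
  have hvcs : HasCompactSupport (fun x => (φ x : ℂ) * u x) :=
    HasCompactSupport.intro (isCompact_Icc (a := -R) (b := R)) fun x hx => by
      simp [hφK x hx]
  have hT : MemLp (fun x => (φ x : ℂ) * lExpr p Q s r u u' w x
      + (-2 : ℂ) * ((φ' x : ℂ) * qd1 p Q r u u' x)
      + (-1 : ℂ) * ((p' x : ℂ) * (φ' x : ℂ) * u x)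
      + (-1 : ℂ) * ((p x : ℂ) * (φ'' x : ℂ) * u x)
      + (-1 : ℂ) * (2 * (Q x : ℂ) * (φ' x : ℂ) * u x)) 2 volume :=
    (((hA1.add hA2).add hA3).add hA4).add hA5
  refine ⟨_, _, hQD, hv2, ?_, hvcs⟩
  rw [funext hlid]
  exact hT


end
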